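/- Let Q be an axis-parallel square subdivided into k² congruent axis-parallel square cells (a k × k grid of cells), where k is a positive integer. For any two cells σ and τ of this grid, the number of cells of the grid whose interior has nonempty intersection with the convex hull of σ ∪ τ is at most 4k. -/

import Mathlib

noncomputable section

/-- Points live in the Euclidean plane. -/
abbrev Pt := EuclideanSpace ℝ (Fin 2)

/-- The `(i,j)`-th closed cell of side `s / k` in the subdivision of the axis-parallel
square with bottom-left corner `(x₀, y₀)` and side `s` into `k²` congruent cells. -/
def cell (x₀ y₀ s : ℝ) (k : ℕ) (i j : Fin k) : Set Pt :=
  {p | x₀ + ((i : ℕ) : ℝ) * (s / k) ≤ p 0 ∧ p 0 ≤ x₀ + (((i : ℕ) : ℝ) + 1) * (s / k) ∧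
       y₀ + ((j : ℕ) : ℝ) * (s / k) ≤ p 1 ∧ p 1 ≤ y₀ + (((j : ℕ) : ℝ) + 1) * (s / k)}

def Sarith (k : ℕ) (ri rj ri' rj' : ℝ) : Set (Fin k × Fin k) :=
  {c | ∃ t : ℝ, t ∈ Set.Icc (0:ℝ) 1 ∧
      |((c.1 : ℕ) : ℝ) - ((1 - t) * ri + t * ri')| < 1 ∧
      |((c.2 : ℕ) : ℝ) - ((1 - t) * rj + t * rj')| < 1}

lemma nat_eq_of_abs_lt {m n : ℕ} (h : |(m:ℝ) - (n:ℝ)| < 1) : m = n := by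
  rw [abs_lt] at h
  have h1 : (m:ℝ) < (n:ℝ) + 1 := by linarith
  have h2 : (n:ℝ) < (m:ℝ) + 1 := by linarith
  have h1' : m < n + 1 := by exact_mod_cast h1
  have h2' : n < m + 1 := by exact_mod_cast h2
  omega

def alphaF (p ri : ℝ) (a : ℕ) : ℝ := if p = 0 then 0 else max 0 (((a:ℝ) - 1 - ri)/p)
def betaF (p ri : ℝ) (a : ℕ) : ℝ := if p = 0 then 1 else min 1 (((a:ℝ) + 1 - ri)/p)

def phiF (k : ℕ) (ri rj p q : ℝ) : Fin k × Fin k → Bool × Bool × Fin k := fun c =>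
  if ((c.2 : ℕ):ℝ) ≤ rj + alphaF p ri (c.1 : ℕ) * q then (false, false, c.1)
  else if rj + betaF p ri (c.1 : ℕ) * q < ((c.2 : ℕ):ℝ) then (false, true, c.1)
  else (true, decide (⌈p * ((((c.2 : ℕ):ℝ) - rj)/q) + ri - 1⌉ = ((c.1 : ℕ):ℤ)), c.2)

lemma card_sorted (k : ℕ) (ri rj ri' rj' : ℝ) (hi : ri ≤ ri') (hj : rj ≤ rj') :
    (Sarith k ri rj ri' rj').ncard ≤ 4 * k := by
  set p := ri' - ri with hp_def
  set q := rj' - rj with hq_def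
  have hp : 0 ≤ p := by simp only [hp_def]; linarith
  have hq : 0 ≤ q := by simp only [hq_def]; linarith
  have hmemx : ∀ (a : ℕ) (t : ℝ), |(a:ℝ) - ((1 - t) * ri + t * ri')| = |(a:ℝ) - (ri + t * p)| := by
    intro a t; congr 1; simp only [hp_def]; ring
  have hmemy : ∀ (b : ℕ) (t : ℝ), |(b:ℝ) - ((1 - t) * rj + t * rj')| = |(b:ℝ) - (rj + t * q)| := by
    intro b t; congr 1; simp only [hq_def]; ring
  have hF : ∀ (a : ℕ) (t : ℝ), t ∈ Set.Icc (0:ℝ) 1 → |(a:ℝ) - (ri + t * p)| < 1 →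
      alphaF p ri a ≤ t ∧ t ≤ betaF p ri a := by
    intro a t ht habs
    rw [abs_lt] at habs
    by_cases hp0 : p = 0
    · simp [alphaF, betaF, hp0, ht.1, ht.2]
    · have hppos : 0 < p := lt_of_le_of_ne hp (Ne.symm hp0)
      constructor
      · simp only [alphaF, hp0, if_false]
        refine max_le ht.1 ?_
        rw [div_le_iff₀ hppos]
        nlinarith [habs.2]
      · simp only [betaF, hp0, if_false]
        refine le_min ht.2 ?_
        rw [le_div_iff₀ hppos]
        nlinarith [habs.1]
  have hmid : ∀ (a2 b2 : Fin k) (t2 : ℝ), t2 ∈ Set.Icc (0:ℝ) 1 →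
      |((a2 : ℕ):ℝ) - (ri + t2 * p)| < 1 →
      rj + alphaF p ri (a2 : ℕ) * q < ((b2 : ℕ):ℝ) → ((b2 : ℕ):ℝ) ≤ rj + betaF p ri (a2 : ℕ) * q →
      (⌈p * ((((b2 : ℕ):ℝ) - rj)/q) + ri - 1⌉ ≤ ((a2 : ℕ):ℤ) ∧
        ((a2 : ℕ):ℤ) < ⌈p * ((((b2 : ℕ):ℝ) - rj)/q) + ri - 1⌉ + 2) := by
    intro a2 b2 t2 ht2 hta2 hmlo hmhi
    have hq0 : q ≠ 0 := by
      intro h0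
      rw [h0] at hmlo hmhi
      simp only [mul_zero, add_zero] at hmlo hmhi
      linarith
    have hqpos : 0 < q := lt_of_le_of_ne hq (Ne.symm hq0)
    set u : ℝ := ((((b2 : ℕ)):ℝ) - rj)/q with hu_def
    have hu_eq : rj + u * q = ((b2 : ℕ):ℝ) := by rw [hu_def]; field_simp; ring
    have hau : alphaF p ri (a2 : ℕ) < u := by
      have h1 : alphaF p ri (a2 : ℕ) * q < u * q := by nlinarith
      exact lt_of_mul_lt_mul_right h1 hq
    have hub : u ≤ betaF p ri (a2 : ℕ) := by
      have h1 : u * q ≤ betaF p ri (a2 : ℕ) * q := by nlinarith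
      exact le_of_mul_le_mul_right h1 hqpos
    have hceil := Int.le_ceil (p * u + ri - 1)
    rw [abs_lt] at hta2
    by_cases hp0 : p = 0
    · have hpu : p * u = 0 := by rw [hp0]; ring
      have htp : t2 * p = 0 := by rw [hp0]; ring
      constructor
      · rw [Int.ceil_le]
        push_cast
        linarith [hta2.1]
      · have h2 : ((a2:ℕ):ℝ) < ((⌈p * u + ri - 1⌉:ℤ):ℝ) + 2 := by
          linarith [hceil, hta2.2]
        exact_mod_cast h2
    · have hppos : 0 < p := lt_of_le_of_ne hp (Ne.symm hp0)
      have halpha_ge : ((a2:ℕ):ℝ) - 1 - ri ≤ alphaF p ri (a2 : ℕ) * p := by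
        have : (((a2:ℕ):ℝ) - 1 - ri)/p ≤ alphaF p ri (a2 : ℕ) := by
          simp only [alphaF, hp0, if_false]; exact le_max_right _ _
        rw [div_le_iff₀ hppos] at this
        linarith
      have hbeta_le : betaF p ri (a2 : ℕ) * p ≤ ((a2:ℕ):ℝ) + 1 - ri := by
        have : betaF p ri (a2 : ℕ) ≤ (((a2:ℕ):ℝ) + 1 - ri)/p := by
          simp only [betaF, hp0, if_false]; exact min_le_right _ _
        rw [le_div_iff₀ hppos] at this
        linarith
      constructor
      · rw [Int.ceil_le]
        push_cast
        nlinarith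
      · have h2 : ((a2:ℕ):ℝ) < ((⌈p * u + ri - 1⌉:ℤ):ℝ) + 2 := by nlinarith
        exact_mod_cast h2
  have hinj : Set.InjOn (phiF k ri rj p q) (Sarith k ri rj ri' rj') := by
    rintro ⟨a, b⟩ hab ⟨a', b'⟩ hab' heq
    obtain ⟨t, ht, hta, htb⟩ := hab
    obtain ⟨t', ht', hta', htb'⟩ := hab'
    simp only at hta htb hta' htb'
    rw [hmemx] at hta hta'
    rw [hmemy] at htb htb'
    have hAB := hF (a : ℕ) t ht hta
    have hAB' := hF (a' : ℕ) t' ht' hta'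
    have hblo : rj + alphaF p ri (a:ℕ) * q - 1 < ((b:ℕ):ℝ) := by
      have h1 : rj + alphaF p ri (a:ℕ) * q ≤ rj + t * q := by nlinarith [hAB.1]
      rw [abs_lt] at htb; linarith
    have hbhi : ((b:ℕ):ℝ) < rj + betaF p ri (a:ℕ) * q + 1 := by
      have h1 : rj + t * q ≤ rj + betaF p ri (a:ℕ) * q := by nlinarith [hAB.2]
      rw [abs_lt] at htb; linarith
    have hblo' : rj + alphaF p ri (a':ℕ) * q - 1 < ((b':ℕ):ℝ) := by
      have h1 : rj + alphaF p ri (a':ℕ) * q ≤ rj + t' * q := by nlinarith [hAB'.1]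
      rw [abs_lt] at htb'; linarith
    have hbhi' : ((b':ℕ):ℝ) < rj + betaF p ri (a':ℕ) * q + 1 := by
      have h1 : rj + t' * q ≤ rj + betaF p ri (a':ℕ) * q := by nlinarith [hAB'.2]
      rw [abs_lt] at htb'; linarith
    simp only [phiF] at heq
    by_cases c1 : ((b:ℕ):ℝ) ≤ rj + alphaF p ri (a:ℕ) * q <;>
      by_cases c1' : ((b':ℕ):ℝ) ≤ rj + alphaF p ri (a':ℕ) * q
    · -- low / low
      rw [if_pos c1, if_pos c1'] at heq
      have ha : a = a' := by
        have := congrArg (fun x => x.2.2) heq; exact this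
      subst ha
      have hb : (b:ℕ) = (b':ℕ) := by
        apply nat_eq_of_abs_lt
        rw [abs_lt]
        constructor <;> linarith [hblo, hblo', c1, c1']
      exact Prod.ext rfl (Fin.ext hb)
    · rw [if_pos c1, if_neg c1'] at heq
      by_cases c2' : rj + betaF p ri (a':ℕ) * q < ((b':ℕ):ℝ)
      · rw [if_pos c2'] at heq; simp at heq
      · rw [if_neg c2'] at heq; simp at heq
    · rw [if_neg c1, if_pos c1'] at heq
      by_cases c2 : rj + betaF p ri (a:ℕ) * q < ((b:ℕ):ℝ)
      · rw [if_pos c2] at heq; simp at heq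
      · rw [if_neg c2] at heq; simp at heq
    · rw [if_neg c1, if_neg c1'] at heq
      by_cases c2 : rj + betaF p ri (a:ℕ) * q < ((b:ℕ):ℝ) <;>
        by_cases c2' : rj + betaF p ri (a':ℕ) * q < ((b':ℕ):ℝ)
      · -- high / high
        rw [if_pos c2, if_pos c2'] at heq
        have ha : a = a' := by
          have := congrArg (fun x => x.2.2) heq; exact this
        subst ha
        have hb : (b:ℕ) = (b':ℕ) := by
          apply nat_eq_of_abs_lt
          rw [abs_lt]
          constructor <;> linarith [hbhi, hbhi', c2, c2']
        exact Prod.ext rfl (Fin.ext hb)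
      · rw [if_pos c2, if_neg c2'] at heq; simp at heq
      · rw [if_neg c2, if_pos c2'] at heq; simp at heq
      · -- mid / mid
        rw [if_neg c2, if_neg c2'] at heq
        have hb : b = b' := by
          have := congrArg (fun x => x.2.2) heq; exact this
        subst hb
        have hdec : (⌈p * ((((b : ℕ):ℝ) - rj)/q) + ri - 1⌉ = ((a : ℕ):ℤ)) ↔
            (⌈p * ((((b : ℕ):ℝ) - rj)/q) + ri - 1⌉ = ((a' : ℕ):ℤ)) := by
          have := congrArg (fun x => x.2.1) heq
          simpa [decide_eq_decide] using this
        have hm := hmid a b t ht hta (lt_of_not_ge c1) (le_of_not_gt c2)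
        have hm' := hmid a' b t' ht' hta' (lt_of_not_ge c1') (le_of_not_gt c2')
        have ha : (a:ℕ) = (a':ℕ) := by
          rcases hdec with ⟨hd1, hd2⟩
          by_cases he : ⌈p * ((((b : ℕ):ℝ) - rj)/q) + ri - 1⌉ = ((a : ℕ):ℤ)
          · have := hd1 he; omega
          · have he' : ¬(⌈p * ((((b : ℕ):ℝ) - rj)/q) + ri - 1⌉ = ((a' : ℕ):ℤ)) := fun h => he (hd2 h)
            omega
        exact Prod.ext (Fin.ext ha) rfl
  calc (Sarith k ri rj ri' rj').ncard
      = ((phiF k ri rj p q) '' (Sarith k ri rj ri' rj')).ncard :=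
        (Set.ncard_image_of_injOn hinj).symm
    _ ≤ (Set.univ : Set (Bool × Bool × Fin k)).ncard :=
        Set.ncard_le_ncard (Set.subset_univ _) (Set.toFinite _)
    _ = 4 * k := by
        rw [Set.ncard_univ]
        simp [Nat.card_eq_fintype_card]
        ring

lemma Sarith_swap (k : ℕ) (ri rj ri' rj' : ℝ) :
    Sarith k ri rj ri' rj' = Sarith k ri' rj' ri rj := by
  ext c
  simp only [Sarith, Set.mem_setOf_eq]
  constructor <;> rintro ⟨t, ht, h1, h2⟩ <;>
    refine ⟨1 - t, ⟨by linarith [ht.2], by linarith [ht.1]⟩, ?_, ?_⟩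
  · have e : (1 - (1 - t)) * ri' + (1 - t) * ri = (1 - t) * ri + t * ri' := by ring
    rw [e]; exact h1
  · have e : (1 - (1 - t)) * rj' + (1 - t) * rj = (1 - t) * rj + t * rj' := by ring
    rw [e]; exact h2
  · have e : (1 - (1 - t)) * ri + (1 - t) * ri' = (1 - t) * ri' + t * ri := by ring
    rw [e]; exact h1
  · have e : (1 - (1 - t)) * rj + (1 - t) * rj' = (1 - t) * rj' + t * rj := by ring
    rw [e]; exact h2

lemma Sarith_reflect2 (k : ℕ) (ri rj ri' rj' : ℝ) :
    (Sarith k ri rj ri' rj').ncard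
      = (Sarith k ri ((k:ℝ) - 1 - rj) ri' ((k:ℝ) - 1 - rj')).ncard := by
  have hrev : ∀ (b : Fin k), ((b.rev : ℕ) : ℝ) = (k:ℝ) - 1 - ((b:ℕ):ℝ) := by
    intro b
    rw [Fin.val_rev]
    have hb : (b:ℕ) + 1 ≤ k := b.isLt
    push_cast [Nat.cast_sub hb]
    ring
  have himg : Sarith k ri ((k:ℝ) - 1 - rj) ri' ((k:ℝ) - 1 - rj')
      = (fun c : Fin k × Fin k => (c.1, c.2.rev)) '' (Sarith k ri rj ri' rj') := by
    ext c
    constructor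
    · rintro ⟨t, ht, h1, h2⟩
      refine ⟨(c.1, c.2.rev), ⟨t, ht, h1, ?_⟩, by simp⟩
      have e : ((c.2.rev : ℕ) : ℝ) - ((1 - t) * rj + t * rj')
          = -(((c.2 : ℕ):ℝ) - ((1 - t) * ((k:ℝ) - 1 - rj) + t * ((k:ℝ) - 1 - rj'))) := by
        rw [hrev]; ring
      rw [e, abs_neg]; exact h2
    · rintro ⟨⟨a, b⟩, ⟨t, ht, h1, h2⟩, rfl⟩
      refine ⟨t, ht, h1, ?_⟩
      have e : ((b.rev : ℕ) : ℝ) - ((1 - t) * ((k:ℝ) - 1 - rj) + t * ((k:ℝ) - 1 - rj'))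
          = -(((b : ℕ):ℝ) - ((1 - t) * rj + t * rj')) := by
        rw [hrev]; ring
      simp only
      rw [e, abs_neg]; exact h2
  rw [himg, Set.ncard_image_of_injective]
  intro x y hxy
  simp only [Prod.mk.injEq] at hxy
  obtain ⟨h1, h2⟩ := hxy
  have h2' : x.2 = y.2 := by
    have := congrArg Fin.rev h2
    simpa using this
  exact Prod.ext h1 h2'

lemma card_general (k : ℕ) (ri rj ri' rj' : ℝ) :
    (Sarith k ri rj ri' rj').ncard ≤ 4 * k := by
  rcases le_total ri ri' with h1 | h1 <;> rcases le_total rj rj' with h2 | h2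
  · exact card_sorted k ri rj ri' rj' h1 h2
  · rw [Sarith_reflect2]
    exact card_sorted k ri _ ri' _ h1 (by linarith)
  · rw [Sarith_swap, Sarith_reflect2]
    exact card_sorted k ri' _ ri _ h1 (by linarith)
  · rw [Sarith_swap]
    exact card_sorted k ri' rj' ri rj h1 h2

lemma combo_bounds {lo1 hi1 lo2 hi2 x y a b : ℝ} (ha : 0 ≤ a) (hb : 0 ≤ b)
    (hx1 : lo1 ≤ x) (hx2 : x ≤ hi1) (hy1 : lo2 ≤ y) (hy2 : y ≤ hi2) :
    a * lo1 + b * lo2 ≤ a * x + b * y ∧ a * x + b * y ≤ a * hi1 + b * hi2 :=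
  ⟨add_le_add (mul_le_mul_of_nonneg_left hx1 ha) (mul_le_mul_of_nonneg_left hy1 hb),
   add_le_add (mul_le_mul_of_nonneg_left hx2 ha) (mul_le_mul_of_nonneg_left hy2 hb)⟩

lemma cell_convex (x₀ y₀ s : ℝ) (k : ℕ) (i j : Fin k) : Convex ℝ (cell x₀ y₀ s k i j) := by
  intro u hu v hv a b ha hb hab
  obtain ⟨h1, h2, h3, h4⟩ := hu
  obtain ⟨g1, g2, g3, g4⟩ := hv
  have e0 : (a • u + b • v) 0 = a * u 0 + b * v 0 := rfl
  have e1 : (a • u + b • v) 1 = a * u 1 + b * v 1 := rfl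
  have c0 := combo_bounds ha hb h1 h2 g1 g2
  have c1 := combo_bounds ha hb h3 h4 g3 g4
  have hsum : ∀ r : ℝ, a * r + b * r = r := by
    intro r; rw [← add_mul, hab, one_mul]
  refine ⟨?_, ?_, ?_, ?_⟩ <;> [rw [e0]; rw [e0]; rw [e1]; rw [e1]]
  · linarith [c0.1, hsum (x₀ + ((i:ℕ):ℝ) * (s / k))]
  · linarith [c0.2, hsum (x₀ + (((i:ℕ):ℝ) + 1) * (s / k))]
  · linarith [c1.1, hsum (y₀ + ((j:ℕ):ℝ) * (s / k))]
  · linarith [c1.2, hsum (y₀ + (((j:ℕ):ℝ) + 1) * (s / k))]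

lemma cell_nonempty (x₀ y₀ s : ℝ) (k : ℕ) (hw : 0 ≤ s / k) (i j : Fin k) :
    (cell x₀ y₀ s k i j).Nonempty := by
  refine ⟨(WithLp.equiv 2 (Fin 2 → ℝ)).symm ![x₀ + ((i:ℕ):ℝ) * (s/k), y₀ + ((j:ℕ):ℝ) * (s/k)], ?_⟩
  have e0 : ((WithLp.equiv 2 (Fin 2 → ℝ)).symm
      ![x₀ + ((i:ℕ):ℝ) * (s/k), y₀ + ((j:ℕ):ℝ) * (s/k)]) 0 = x₀ + ((i:ℕ):ℝ) * (s/k) := rfl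
  have e1 : ((WithLp.equiv 2 (Fin 2 → ℝ)).symm
      ![x₀ + ((i:ℕ):ℝ) * (s/k), y₀ + ((j:ℕ):ℝ) * (s/k)]) 1 = y₀ + ((j:ℕ):ℝ) * (s/k) := rfl
  refine ⟨by rw [e0], by rw [e0]; nlinarith, by rw [e1], by rw [e1]; nlinarith⟩

lemma interior_cell_strict {x₀ y₀ s : ℝ} {k : ℕ} {i j : Fin k} {z : Pt}
    (hz : z ∈ interior (cell x₀ y₀ s k i j)) :
    x₀ + ((i:ℕ):ℝ) * (s/k) < z 0 ∧ z 0 < x₀ + (((i:ℕ):ℝ) + 1) * (s/k) ∧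
    y₀ + ((j:ℕ):ℝ) * (s/k) < z 1 ∧ z 1 < y₀ + (((j:ℕ):ℝ) + 1) * (s/k) := by
  rw [mem_interior_iff_mem_nhds, Metric.mem_nhds_iff] at hz
  obtain ⟨ε, hε, hball⟩ := hz
  have key : ∀ (m : Fin 2) (c : ℝ), |c| < ε → z + c • EuclideanSpace.single m (1:ℝ) ∈
      cell x₀ y₀ s k i j := by
    intro m c hc
    apply hball
    rw [Metric.mem_ball, dist_eq_norm]
    have : z + c • EuclideanSpace.single m (1:ℝ) - z = c • EuclideanSpace.single m (1:ℝ) := by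
      abel
    rw [this, norm_smul, EuclideanSpace.norm_single]
    simpa using hc
  have happ : ∀ (m : Fin 2) (c : ℝ) (l : Fin 2),
      (z + c • EuclideanSpace.single m (1:ℝ)) l = z l + c * (if l = m then 1 else 0) := by
    intro m c l
    have : (z + c • EuclideanSpace.single m (1:ℝ)) l = z l + c * (EuclideanSpace.single m (1:ℝ)) l := rfl
    rw [this, EuclideanSpace.single_apply]
  have habs : |ε/2| < ε := by rw [abs_of_pos (by linarith)]; linarith
  have habs' : |-(ε/2)| < ε := by rw [abs_neg, abs_of_pos (by linarith)]; linarith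
  have hp0 := key 0 (ε/2) habs
  have hm0 := key 0 (-(ε/2)) habs'
  have hp1 := key 1 (ε/2) habs
  have hm1 := key 1 (-(ε/2)) habs'
  obtain ⟨a1, a2, a3, a4⟩ := hp0
  obtain ⟨b1, b2, b3, b4⟩ := hm0
  obtain ⟨c1, c2, c3, c4⟩ := hp1
  obtain ⟨d1, d2, d3, d4⟩ := hm1
  rw [happ] at a1 a2 b1 b2 c3 c4 d3 d4
  norm_num at a1 a2 b1 b2 c3 c4 d3 d4
  refine ⟨by linarith, by linarith, by linarith, by linarith⟩

lemma hit_to_arith (x₀ y₀ s : ℝ) (hs : 0 < s) (k : ℕ) (hk : 0 < k) (i j i' j' : Fin k)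
    (c : Fin k × Fin k)
    (h : (interior (cell x₀ y₀ s k c.1 c.2) ∩
        convexHull ℝ (cell x₀ y₀ s k i j ∪ cell x₀ y₀ s k i' j')).Nonempty) :
    c ∈ Sarith k ((i:ℕ):ℝ) ((j:ℕ):ℝ) ((i':ℕ):ℝ) ((j':ℕ):ℝ) := by
  have hkpos : (0:ℝ) < k := by exact_mod_cast hk
  have hw : 0 < s / k := div_pos hs hkpos
  obtain ⟨z, hzI, hzH⟩ := h
  rw [Convex.convexHull_union (cell_convex _ _ _ _ _ _) (cell_convex _ _ _ _ _ _)
    (cell_nonempty _ _ _ _ hw.le _ _) (cell_nonempty _ _ _ _ hw.le _ _), mem_convexJoin] at hzH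
  obtain ⟨x, hx, y, hy, hseg⟩ := hzH
  rw [segment_eq_image] at hseg
  obtain ⟨t, ht, hzeq⟩ := hseg
  rw [Set.mem_Icc] at ht
  obtain ⟨ht1, ht2⟩ := ht
  have e0 : ((1 - t) • x + t • y) 0 = (1 - t) * x 0 + t * y 0 := rfl
  have e1 : ((1 - t) • x + t • y) 1 = (1 - t) * x 1 + t * y 1 := rfl
  obtain ⟨s1, s2, s3, s4⟩ := interior_cell_strict hzI
  rw [← hzeq] at s1 s2 s3 s4
  simp only at s1 s2 s3 s4
  rw [e0] at s1 s2
  rw [e1] at s3 s4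
  obtain ⟨hx1, hx2, hx3, hx4⟩ := hx
  obtain ⟨hy1, hy2, hy3, hy4⟩ := hy
  have ht0 : (0:ℝ) ≤ 1 - t := by linarith
  have cX := combo_bounds ht0 ht1 hx1 hx2 hy1 hy2
  have cY := combo_bounds ht0 ht1 hx3 hx4 hy3 hy4
  refine ⟨t, Set.mem_Icc.mpr ⟨ht1, ht2⟩, ?_, ?_⟩
  · rw [abs_lt]
    constructor
    · -- -1 < c1 - m, i.e. m < c1 + 1, from cX.1 and s2
      have h1 : x₀ + ((1 - t) * ((i:ℕ):ℝ) + t * ((i':ℕ):ℝ)) * (s/k)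
          < x₀ + (((c.1:ℕ):ℝ) + 1) * (s/k) := by
        have e : (1 - t) * (x₀ + ((i:ℕ):ℝ) * (s/k)) + t * (x₀ + ((i':ℕ):ℝ) * (s/k))
            = x₀ + ((1 - t) * ((i:ℕ):ℝ) + t * ((i':ℕ):ℝ)) * (s/k) := by ring
        linarith [cX.1, s2, e]
      have h2 : ((1 - t) * ((i:ℕ):ℝ) + t * ((i':ℕ):ℝ)) * (s/k)
          < (((c.1:ℕ):ℝ) + 1) * (s/k) := by linarith
      have := lt_of_mul_lt_mul_right h2 hw.le
      linarith
    · -- c1 - m < 1, i.e. c1 < m + 1, from s1 and cX.2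
      have h1 : x₀ + ((c.1:ℕ):ℝ) * (s/k)
          < x₀ + ((1 - t) * ((i:ℕ):ℝ) + t * ((i':ℕ):ℝ) + 1) * (s/k) := by
        have e : (1 - t) * (x₀ + (((i:ℕ):ℝ) + 1) * (s/k)) + t * (x₀ + (((i':ℕ):ℝ) + 1) * (s/k))
            = x₀ + ((1 - t) * ((i:ℕ):ℝ) + t * ((i':ℕ):ℝ) + 1) * (s/k) := by ring
        linarith [cX.2, s1, e]
      have h2 : (((c.1:ℕ):ℝ)) * (s/k)
          < ((1 - t) * ((i:ℕ):ℝ) + t * ((i':ℕ):ℝ) + 1) * (s/k) := by linarith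
      have := lt_of_mul_lt_mul_right h2 hw.le
      linarith
  · rw [abs_lt]
    constructor
    · have h1 : y₀ + ((1 - t) * ((j:ℕ):ℝ) + t * ((j':ℕ):ℝ)) * (s/k)
          < y₀ + (((c.2:ℕ):ℝ) + 1) * (s/k) := by
        have e : (1 - t) * (y₀ + ((j:ℕ):ℝ) * (s/k)) + t * (y₀ + ((j':ℕ):ℝ) * (s/k))
            = y₀ + ((1 - t) * ((j:ℕ):ℝ) + t * ((j':ℕ):ℝ)) * (s/k) := by ring
        linarith [cY.1, s4, e]
      have h2 : ((1 - t) * ((j:ℕ):ℝ) + t * ((j':ℕ):ℝ)) * (s/k)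
          < (((c.2:ℕ):ℝ) + 1) * (s/k) := by linarith
      have := lt_of_mul_lt_mul_right h2 hw.le
      linarith
    · have h1 : y₀ + ((c.2:ℕ):ℝ) * (s/k)
          < y₀ + ((1 - t) * ((j:ℕ):ℝ) + t * ((j':ℕ):ℝ) + 1) * (s/k) := by
        have e : (1 - t) * (y₀ + (((j:ℕ):ℝ) + 1) * (s/k)) + t * (y₀ + (((j':ℕ):ℝ) + 1) * (s/k))
            = y₀ + ((1 - t) * ((j:ℕ):ℝ) + t * ((j':ℕ):ℝ) + 1) * (s/k) := by ring
        linarith [cY.2, s3, e]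
      have h2 : (((c.2:ℕ):ℝ)) * (s/k)
          < ((1 - t) * ((j:ℕ):ℝ) + t * ((j':ℕ):ℝ) + 1) * (s/k) := by linarith
      have := lt_of_mul_lt_mul_right h2 hw.le
      linarith


/-- For any two cells `σ`, `τ` of the subdivision of an axis-parallel square into a
`k × k` grid of congruent cells, the convex hull of `σ ∪ τ` meets the interiors of at
most `4k` cells of the grid. -/
theorem hull_of_two_cells_meets_few_cells (x₀ y₀ s : ℝ) (hs : 0 < s)
    (k : ℕ) (hk : 0 < k) (i j i' j' : Fin k) :
    ({c : Fin k × Fin k |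
        (interior (cell x₀ y₀ s k c.1 c.2) ∩
          convexHull ℝ (cell x₀ y₀ s k i j ∪ cell x₀ y₀ s k i' j')).Nonempty} :
      Set (Fin k × Fin k)).ncard ≤ 4 * k := by
  refine le_trans (Set.ncard_le_ncard ?_ (Set.toFinite _))
    (card_general k ((i:ℕ):ℝ) ((j:ℕ):ℝ) ((i':ℕ):ℝ) ((j':ℕ):ℝ))
  intro c hc
  exact hit_to_arith x₀ y₀ s hs k hk i j i' j' c hc
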